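/- Suppose $U$ is an open subset of $\mathbf{R}^n$, $\mu$ is a Radon measure over $U$, $Y$ is a finite dimensional normed vector space, and $f_i$ is a sequence of $\mu$-measurable $Y$-valued functions on $U$ such that: whenever $X$ is a $\mu$-measurable set with $\mu(X) < \infty$ and $\varepsilon > 0$, there exists $\kappa < \infty$ such that for each $i$ there exists a subset $A$ of $X$ with $\mu(X \setminus A) \leq \varepsilon$, $\sup_{x \in A} |f_i(x)| \leq \kappa$, and $\mathrm{Lip}(f_i|A) \leq \kappa$. Then there exist a $\mu$-measurable $Y$-valued function $f$ and a subsequence of $f_i$ which converges to $f$ in $\mu \restriction K$ measure for every compact subset $K$ of $U$. -/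

import Mathlib

open MeasureTheory Metric Set Filter
open scoped ENNReal NNReal

lemma aux_exhaustion {E : Type*} [NormedAddCommGroup E] [ProperSpace E] {U : Set E} (hU : IsOpen U) :
    ∃ K : ℕ → Set E, (∀ m, IsCompact (K m)) ∧ (∀ m, K m ⊆ U) ∧ Monotone K ∧
      (∀ m, K m ⊆ closedBall 0 m) ∧
      (∀ C, C ⊆ U → IsCompact C → ∃ m, C ⊆ K m) := by
  refine ⟨fun m => closedBall 0 m ∩ {x | ((m : ℝ≥0∞) + 1)⁻¹ ≤ Metric.infEDist x Uᶜ}, ?_, ?_, ?_, ?_, ?_⟩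
  · intro m
    exact (isCompact_closedBall 0 m).inter_right
      (isClosed_le continuous_const Metric.continuous_infEDist)
  · intro m x hx
    by_contra hxU
    have h0 : Metric.infEDist x Uᶜ = 0 := by
      rw [← Metric.mem_closure_iff_infEDist_zero]
      exact subset_closure hxU
    have := hx.2
    rw [Set.mem_setOf_eq, h0, le_zero_iff] at this
    exact (ENNReal.inv_ne_zero.mpr (by simp)) this
  · intro m m' hmm' x hx
    refine ⟨closedBall_subset_closedBall (by exact_mod_cast hmm') hx.1, ?_⟩
    refine Set.mem_setOf_eq ▸ le_trans ?_ hx.2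
    have : (m:ℝ≥0∞) ≤ m' := by exact_mod_cast hmm'
    gcongr
  · intro m
    exact Set.inter_subset_left
  · intro C hCU hCc
    rcases C.eq_empty_or_nonempty with rfl | hCne
    · exact ⟨0, by simp⟩
    obtain ⟨R, hR⟩ := hCc.isBounded.subset_closedBall 0
    obtain ⟨x₀, hx₀C, hx₀⟩ := hCc.exists_isMinOn hCne Metric.continuous_infEDist.continuousOn
    have hpos : Metric.infEDist x₀ Uᶜ ≠ 0 := by
      intro h0
      rw [← Metric.mem_closure_iff_infEDist_zero, hU.isClosed_compl.closure_eq] at h0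
      exact h0 (hCU hx₀C)
    obtain ⟨N, hN⟩ := ENNReal.exists_inv_nat_lt hpos
    refine ⟨max ⌈R⌉₊ N, fun x hx => ⟨?_, ?_⟩⟩
    · refine closedBall_subset_closedBall ?_ (hR hx)
      calc R ≤ ⌈R⌉₊ := Nat.le_ceil R
        _ ≤ (max ⌈R⌉₊ N : ℕ) := by exact_mod_cast le_max_left _ _
    · have hmin : Metric.infEDist x₀ Uᶜ ≤ Metric.infEDist x Uᶜ := hx₀ hx
      refine le_trans ?_ hmin
      refine le_trans ?_ hN.le
      gcongr
      calc (N : ℝ≥0∞) ≤ (max ⌈R⌉₊ N : ℕ) := by exact_mod_cast le_max_right _ _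
        _ ≤ _ + 1 := le_self_add

lemma aux_sq0 {f g : ℕ → ℝ≥0∞} (h : ∀ j, f j ≤ g j) (hg : Tendsto g atTop (nhds 0)) :
    Tendsto f atTop (nhds 0) :=
  tendsto_of_tendsto_of_tendsto_of_le_of_le tendsto_const_nhds hg (fun _ => zero_le) h

/-- compactness criterion for local convergence in measure via uniform
approximability by uniformly bounded Lipschitz restrictions. -/
theorem compactness_in_measure {n : ℕ} (U : Set (EuclideanSpace ℝ (Fin n))) (hU : IsOpen U)
    (μ : Measure (EuclideanSpace ℝ (Fin n)))
    (hrad : ∀ K : Set (EuclideanSpace ℝ (Fin n)), K ⊆ U → IsCompact K → μ K < ⊤)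
    {Y : Type*} [NormedAddCommGroup Y] [NormedSpace ℝ Y] [FiniteDimensional ℝ Y]
    (f : ℕ → EuclideanSpace ℝ (Fin n) → Y)
    (hmeas : ∀ i, AEStronglyMeasurable (f i) (μ.restrict U))
    (happrox : ∀ X : Set (EuclideanSpace ℝ (Fin n)), MeasurableSet X → X ⊆ U → μ X < ⊤ →
      ∀ ε : ENNReal, 0 < ε → ∃ κ : NNReal, ∀ i, ∃ A ⊆ X, μ (X \ A) ≤ ε ∧
        (∀ x ∈ A, ‖f i x‖ ≤ κ) ∧ LipschitzOnWith κ (f i) A) :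
    ∃ (g : EuclideanSpace ℝ (Fin n) → Y) (φ : ℕ → ℕ),
      AEStronglyMeasurable g (μ.restrict U) ∧ StrictMono φ ∧
      ∀ K : Set (EuclideanSpace ℝ (Fin n)), K ⊆ U → IsCompact K → ∀ t : ℝ, 0 < t →
        Filter.Tendsto (fun j => μ (K ∩ {x | t < ‖f (φ j) x - g x‖}))
          Filter.atTop (nhds 0) := by
  classical
  obtain ⟨K, hKc, hKU, hKmono, hKball, hKabs⟩ := aux_exhaustion hU
  have hKmeas : ∀ m, MeasurableSet (K m) := fun m => (hKc m).measurableSet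
  have hKfin : ∀ m, μ (K m) < ⊤ := fun m => hrad _ (hKU m) (hKc m)
  haveI : ∀ m, IsFiniteMeasure (μ.restrict (K m)) := fun m =>
    ⟨by rw [Measure.restrict_apply_univ]; exact hKfin m⟩
  -- step 1: approximating sets
  have H : ∀ r : ℕ, ∃ κ : NNReal, ∀ i, ∃ A, A ⊆ K r ∧ μ (K r \ A) ≤ (2⁻¹ : ℝ≥0∞) ^ r ∧
      (∀ x ∈ A, ‖f i x‖ ≤ κ) ∧ LipschitzOnWith κ (f i) A := by
    intro r
    exact happrox (K r) (hKmeas r) (hKU r) (hKfin r) _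
      (ENNReal.pow_pos (ENNReal.inv_pos.mpr (by norm_num)) r)
  choose κ A hAsub hAm hAbd hAlip using H
  -- step 2: Lipschitz extensions, bounded at prescribed points
  set L : ℝ≥0 := lipschitzExtensionConstant Y with hL
  have hext : ∀ r i, ∃ h : EuclideanSpace ℝ (Fin n) → Y, LipschitzWith (L * κ r) h ∧ Set.EqOn (f i) h (A r i) ∧
      ∀ x : EuclideanSpace ℝ (Fin n), ‖h x‖ ≤ κ r + (L * κ r : ℝ≥0) * (‖x‖ + r) := by
    intro r i
    rcases (A r i).eq_empty_or_nonempty with h0 | ⟨a0, ha0⟩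
    · refine ⟨fun _ => 0, LipschitzWith.const' 0, ?_, ?_⟩
      · intro x hx
        rw [h0] at hx
        exact absurd hx (Set.notMem_empty x)
      · intro x
        have h1 : (0:ℝ) ≤ κ r := (κ r).coe_nonneg
        have h2 : (0:ℝ) ≤ (L * κ r : ℝ≥0) := (L * κ r).coe_nonneg
        have h3 : (0:ℝ) ≤ ‖x‖ + r := by positivity
        simp only [norm_zero]
        nlinarith
    · obtain ⟨hh, hlip, heq⟩ := (hAlip r i).extend_finite_dimension
      refine ⟨hh, hlip, heq, fun x => ?_⟩
      have h1 : ‖hh a0‖ ≤ κ r := by rw [← heq ha0]; exact hAbd r i a0 ha0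
      have h2 : dist (hh x) (hh a0) ≤ (L * κ r : ℝ≥0) * dist x a0 := hlip.dist_le_mul x a0
      have h3 : ‖a0‖ ≤ r := by
        have := hKball r (hAsub r i ha0)
        rwa [mem_closedBall_zero_iff] at this
      have h4 : dist x a0 ≤ ‖x‖ + r := by
        rw [dist_eq_norm]
        calc ‖x - a0‖ ≤ ‖x‖ + ‖a0‖ := norm_sub_le x a0
          _ ≤ ‖x‖ + r := by linarith
      have h5 : ‖hh x‖ ≤ ‖hh a0‖ + dist (hh x) (hh a0) := by
        rw [dist_eq_norm]
        simpa using norm_add_le (hh a0) (hh x - hh a0)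
      have hc : (0:ℝ) ≤ (L * κ r : ℝ≥0) := (L * κ r).coe_nonneg
      have h6 := mul_le_mul_of_nonneg_left h4 hc
      linarith
  choose h hhlip hheq hhbd using hext
  -- step 3: dense sequence and diagonal subsequence
  obtain ⟨d, hd⟩ := TopologicalSpace.exists_dense_seq (EuclideanSpace ℝ (Fin n))
  set B : ℕ → ℕ → ℝ := fun r l => κ r + (L * κ r : ℝ≥0) * (‖d l‖ + r) with hB
  set S : Set (ℕ × ℕ → Y) := Set.univ.pi fun q => closedBall 0 (B q.1 q.2) with hS
  have hScomp : IsCompact S := isCompact_univ_pi fun q => isCompact_closedBall _ _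
  have hmem : ∀ i, (fun q : ℕ × ℕ => h q.1 i (d q.2)) ∈ S := fun i =>
    Set.mem_univ_pi.mpr fun q => mem_closedBall_zero_iff.mpr (hhbd _ _ _)
  obtain ⟨a, -, φ, hφ, hconv⟩ := hScomp.tendsto_subseq hmem
  have hconv' : ∀ q : ℕ × ℕ, Tendsto (fun j => h q.1 (φ j) (d q.2)) atTop (nhds (a q)) := by
    intro q
    have := tendsto_pi_nhds.mp hconv q
    exact this
  -- step 4: pointwise limits u r of h r (φ j)
  have hcauchy : ∀ (r : ℕ) (x : EuclideanSpace ℝ (Fin n)), ∃ y, Tendsto (fun j => h r (φ j) x) atTop (nhds y) := by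
    intro r x
    refine cauchySeq_tendsto_of_complete ?_
    rw [Metric.cauchySeq_iff']
    intro ε hε
    set c : ℝ := ((L * κ r : ℝ≥0) : ℝ) with hcdef
    have hc0 : (0:ℝ) ≤ c := (L * κ r).coe_nonneg
    obtain ⟨l, hl⟩ := hd.exists_dist_lt x (show 0 < ε / (3 * (c + 1)) by positivity)
    have hcs := (hconv' (r, l)).cauchySeq
    rw [Metric.cauchySeq_iff'] at hcs
    obtain ⟨N, hN⟩ := hcs (ε / 3) (by positivity)
    refine ⟨N, fun j hj => ?_⟩
    have e1 : dist (h r (φ j) x) (h r (φ j) (d l)) ≤ c * dist x (d l) :=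
      (hhlip r (φ j)).dist_le_mul _ _
    have e2 : dist (h r (φ N) (d l)) (h r (φ N) x) ≤ c * dist x (d l) := by
      have := (hhlip r (φ N)).dist_le_mul (d l) x
      rwa [dist_comm (d l) x] at this
    have e3 : dist (h r (φ j) (d l)) (h r (φ N) (d l)) < ε / 3 := hN j hj
    have hcd : c * dist x (d l) ≤ ε / 3 := by
      have h6 : c * dist x (d l) ≤ c * (ε / (3 * (c + 1))) :=
        mul_le_mul_of_nonneg_left hl.le hc0
      have h7 : c * (ε / (3 * (c + 1))) ≤ ε / 3 := by
        rw [mul_div_assoc', div_le_div_iff₀ (by positivity) (by norm_num)]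
        nlinarith
      linarith
    calc dist (h r (φ j) x) (h r (φ N) x) ≤
        dist (h r (φ j) x) (h r (φ j) (d l)) + dist (h r (φ j) (d l)) (h r (φ N) (d l)) +
          dist (h r (φ N) (d l)) (h r (φ N) x) := dist_triangle4 _ _ _ _
      _ < ε := by linarith
  choose u hu using hcauchy
  have humeas : ∀ r, StronglyMeasurable (u r) := by
    intro r
    refine stronglyMeasurable_of_tendsto atTop
      (fun j => ((hhlip r (φ j)).continuous).stronglyMeasurable) ?_
    rw [tendsto_pi_nhds]
    exact hu r
  -- step 5: h r (φ j) → u r in measure on each K m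
  have hmain : ∀ m r (t : ℝ), 0 < t →
      Tendsto (fun j => μ (K m ∩ {x | t < dist (h r (φ j) x) (u r x)})) atTop (nhds 0) := by
    intro m r t ht
    have hTM : TendstoInMeasure (μ.restrict (K m)) (fun j => h r (φ j)) atTop (u r) :=
      tendstoInMeasure_of_tendsto_ae
        (fun j => ((hhlip r (φ j)).continuous.stronglyMeasurable).aestronglyMeasurable)
        (Eventually.of_forall fun x => hu r x)
    refine aux_sq0 (fun j => ?_) (hTM (ENNReal.ofReal t) (ENNReal.ofReal_pos.mpr ht))
    rw [Measure.restrict_apply' (hKmeas m)]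
    refine measure_mono fun x hx => ?_
    have hx2 : t < dist (h r (φ j) x) (u r x) := hx.2
    exact Set.mem_inter (by rw [Set.mem_setOf_eq, edist_dist]; exact ENNReal.ofReal_le_ofReal hx2.le) hx.1
  -- step 6: splitting estimate
  have hsplit : ∀ m r, m ≤ r → ∀ (t : ℝ) (j : ℕ),
      μ (K m ∩ {x | t < dist (f (φ j) x) (u r x)}) ≤
        μ (K r \ A r (φ j)) + μ (K m ∩ {x | t < dist (h r (φ j) x) (u r x)}) := by
    intro m r hmr t j
    refine le_trans (measure_mono ?_) (measure_union_le _ _)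
    rintro x ⟨hxm, hxd⟩
    by_cases hxA : x ∈ A r (φ j)
    · exact Or.inr ⟨hxm, by rwa [Set.mem_setOf_eq, ← hheq r (φ j) hxA]⟩
    · exact Or.inl ⟨hKmono hmr hxm, hxA⟩
  have hfu : ∀ m r, m ≤ r → ∀ t : ℝ, 0 < t → ∀ δ : ℝ≥0∞, 0 < δ →
      ∀ᶠ j in atTop, μ (K m ∩ {x | t < dist (f (φ j) x) (u r x)}) ≤ (2⁻¹ : ℝ≥0∞) ^ r + δ := by
    intro m r hmr t ht δ hδ
    obtain ⟨N, hN⟩ := ENNReal.tendsto_atTop_zero.mp (hmain m r t ht) δ hδ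
    filter_upwards [eventually_ge_atTop N] with j hj
    exact le_trans (hsplit m r hmr t j) (add_le_add (hAm r (φ j)) (hN j hj))
  -- step 7: Borel-Cantelli
  set Es : ℕ → Set (EuclideanSpace ℝ (Fin n)) := fun r =>
    K r ∩ {x | (2⁻¹ : ℝ) ^ r < dist (u r x) (u (r + 1) x)} with hEsdef
  have hEs : ∀ r, μ (Es r) ≤ 3 * (2⁻¹ : ℝ≥0∞) ^ r := by
    intro r
    refine ENNReal.le_of_forall_pos_le_add fun ε hε hfin => ?_
    have ht2 : (0:ℝ) < (2⁻¹:ℝ)^r / 2 := by positivity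
    have hδ : (0:ℝ≥0∞) < (ε:ℝ≥0∞)/2 :=
      ENNReal.div_pos (by exact_mod_cast hε.ne') (by norm_num)
    have h1 := hfu r r le_rfl ((2⁻¹:ℝ)^r / 2) ht2 ((ε:ℝ≥0∞)/2) hδ
    have h2 := hfu r (r+1) (Nat.le_succ r) ((2⁻¹:ℝ)^r / 2) ht2 ((ε:ℝ≥0∞)/2) hδ
    obtain ⟨j, hj1, hj2⟩ := (h1.and h2).exists
    have hsub : Es r ⊆ (K r ∩ {x | (2⁻¹:ℝ)^r / 2 < dist (f (φ j) x) (u r x)}) ∪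
        (K r ∩ {x | (2⁻¹:ℝ)^r / 2 < dist (f (φ j) x) (u (r+1) x)}) := by
      rintro x ⟨hxK, hxd⟩
      have hxd' : (2⁻¹:ℝ)^r < dist (u r x) (u (r+1) x) := hxd
      by_cases hca : (2⁻¹:ℝ)^r / 2 < dist (f (φ j) x) (u r x)
      · exact Or.inl ⟨hxK, hca⟩
      · push_neg at hca
        refine Or.inr ⟨hxK, ?_⟩
        have htri := dist_triangle (u r x) (f (φ j) x) (u (r+1) x)
        have hd1 : dist (u r x) (f (φ j) x) = dist (f (φ j) x) (u r x) := dist_comm _ _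
        show (2⁻¹:ℝ)^r / 2 < dist (f (φ j) x) (u (r+1) x)
        linarith
    have e1 : (2⁻¹:ℝ≥0∞)^(r+1) ≤ (2⁻¹:ℝ≥0∞)^r :=
      pow_le_pow_of_le_one zero_le (by norm_num) (Nat.le_succ r)
    calc μ (Es r) ≤ μ (K r ∩ {x | (2⁻¹:ℝ)^r / 2 < dist (f (φ j) x) (u r x)}) +
          μ (K r ∩ {x | (2⁻¹:ℝ)^r / 2 < dist (f (φ j) x) (u (r+1) x)}) :=
        le_trans (measure_mono hsub) (measure_union_le _ _)
      _ ≤ ((2⁻¹:ℝ≥0∞)^r + (ε:ℝ≥0∞)/2) + ((2⁻¹:ℝ≥0∞)^(r+1) + (ε:ℝ≥0∞)/2) := add_le_add hj1 hj2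
      _ = ((2⁻¹:ℝ≥0∞)^r + (2⁻¹:ℝ≥0∞)^(r+1)) + ((ε:ℝ≥0∞)/2 + (ε:ℝ≥0∞)/2) := by ring
      _ ≤ 3 * (2⁻¹:ℝ≥0∞)^r + (ε:ℝ≥0∞) := by
          rw [ENNReal.add_halves]
          refine add_le_add ?_ le_rfl
          calc (2⁻¹:ℝ≥0∞)^r + (2⁻¹:ℝ≥0∞)^(r+1) ≤ (2⁻¹:ℝ≥0∞)^r + (2⁻¹:ℝ≥0∞)^r :=
              add_le_add le_rfl e1
            _ = 2 * (2⁻¹:ℝ≥0∞)^r := (two_mul _).symm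
            _ ≤ 3 * (2⁻¹:ℝ≥0∞)^r := by gcongr <;> norm_num
  have hBC : μ (Filter.limsup Es atTop) = 0 := by
    refine measure_limsup_atTop_eq_zero (ne_top_of_le_ne_top ?_ (ENNReal.tsum_le_tsum hEs))
    rw [ENNReal.tsum_mul_left, ENNReal.tsum_geometric]
    simp [ENNReal.mul_ne_top]
  -- step 8: a.e. pointwise limit g
  set g : EuclideanSpace ℝ (Fin n) → Y := fun x =>
    if hx : ∃ y, Tendsto (fun r => u r x) atTop (nhds y) then hx.choose else 0 with hgdef
  have hgconv : ∀ x, x ∈ U → x ∉ Filter.limsup Es atTop →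
      Tendsto (fun r => u r x) atTop (nhds (g x)) := by
    intro x hxU hxE
    have hex : ∃ y, Tendsto (fun r => u r x) atTop (nhds y) := by
      obtain ⟨m, hm⟩ := hKabs {x} (Set.singleton_subset_iff.mpr hxU) isCompact_singleton
      have hxK : x ∈ K m := hm rfl
      rw [Filter.mem_limsup_iff_frequently_mem, Filter.not_frequently] at hxE
      obtain ⟨r₀, hr₀⟩ := eventually_atTop.mp hxE
      have hdist : ∀ i : ℕ, dist (u (i + max m r₀) x) (u (i + max m r₀ + 1) x) ≤
          (2⁻¹:ℝ)^(max m r₀) * (2⁻¹:ℝ)^i := by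
        intro i
        have hxKr : x ∈ K (i + max m r₀) :=
          hKmono (le_trans (le_max_left m r₀) (Nat.le_add_left _ i)) hxK
        have hnot : x ∉ Es (i + max m r₀) :=
          hr₀ _ (le_trans (le_max_right m r₀) (Nat.le_add_left _ i))
        have hle : ¬ ((2⁻¹:ℝ)^(i + max m r₀) < dist (u (i + max m r₀) x) (u (i + max m r₀ + 1) x)) :=
          fun hlt => hnot ⟨hxKr, hlt⟩
        push_neg at hle
        calc dist (u (i + max m r₀) x) (u (i + max m r₀ + 1) x) ≤ (2⁻¹:ℝ)^(i + max m r₀) := hle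
          _ = (2⁻¹:ℝ)^(max m r₀) * (2⁻¹:ℝ)^i := by rw [pow_add]; ring
      have hcs : CauchySeq (fun i => u (i + max m r₀) x) :=
        cauchySeq_of_le_geometric 2⁻¹ ((2⁻¹:ℝ)^(max m r₀)) (by norm_num) fun i => by
          simpa [show i + 1 + max m r₀ = i + max m r₀ + 1 by omega] using hdist i
      obtain ⟨y, hy⟩ := cauchySeq_tendsto_of_complete hcs
      exact ⟨y, (Filter.tendsto_add_atTop_iff_nat (max m r₀)).mp hy⟩
    have hgx : g x = hex.choose := by rw [hgdef]; exact dif_pos hex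
    rw [hgx]
    exact hex.choose_spec
  have hgmeas : AEStronglyMeasurable g (μ.restrict U) := by
    refine aestronglyMeasurable_of_tendsto_ae atTop
      (fun r => (humeas r).aestronglyMeasurable) ?_
    have h1 : ∀ᵐ x ∂μ.restrict U, x ∉ Filter.limsup Es atTop :=
      ae_restrict_of_ae (by rw [ae_iff]; simpa using hBC)
    filter_upwards [h1, ae_restrict_mem hU.measurableSet] with x hx hxU
    exact hgconv x hxU hx
  refine ⟨g, φ, hgmeas, hφ, ?_⟩
  intro C hCU hCc t ht
  obtain ⟨m, hm⟩ := hKabs C hCU hCc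
  rw [ENNReal.tendsto_atTop_zero]
  intro ε hε
  have hae : ∀ᵐ x ∂μ.restrict (K m), Tendsto (fun r => u r x) atTop (nhds (g x)) := by
    have h1 : ∀ᵐ x ∂μ.restrict (K m), x ∉ Filter.limsup Es atTop :=
      ae_restrict_of_ae (by rw [ae_iff]; simpa using hBC)
    filter_upwards [h1, ae_restrict_mem (hKmeas m)] with x hx hxK
    exact hgconv x (hKU m hxK) hx
  have hTM : TendstoInMeasure (μ.restrict (K m)) u atTop g :=
    tendstoInMeasure_of_tendsto_ae (fun r => (humeas r).aestronglyMeasurable) hae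
  have hug : Tendsto (fun r => μ (K m ∩ {x | t/2 ≤ dist (u r x) (g x)})) atTop (nhds 0) := by
    refine aux_sq0 (fun r => ?_) (hTM (ENNReal.ofReal (t/2)) (ENNReal.ofReal_pos.mpr (by positivity)))
    rw [Measure.restrict_apply' (hKmeas m)]
    refine measure_mono fun x hx => ?_
    have hx2 : t/2 ≤ dist (u r x) (g x) := hx.2
    exact Set.mem_inter (by rw [Set.mem_setOf_eq, edist_dist]; exact ENNReal.ofReal_le_ofReal hx2) hx.1
  have hε4 : (0:ℝ≥0∞) < ε/4 := ENNReal.div_pos hε.ne' (by norm_num)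
  obtain ⟨r, hr1, hr2, hr3⟩ : ∃ r, m ≤ r ∧
      μ (K m ∩ {x | t/2 ≤ dist (u r x) (g x)}) ≤ ε/4 ∧ (2⁻¹:ℝ≥0∞)^r ≤ ε/4 := by
    obtain ⟨N1, hN1⟩ := ENNReal.tendsto_atTop_zero.mp hug (ε/4) hε4
    obtain ⟨N2, hN2⟩ := ENNReal.tendsto_atTop_zero.mp
      (ENNReal.tendsto_pow_atTop_nhds_zero_of_lt_one
        (show (2⁻¹:ℝ≥0∞) < 1 by norm_num)) (ε/4) hε4
    refine ⟨max m (max N1 N2), le_max_left _ _,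
      hN1 _ (le_trans (le_max_left N1 N2) (le_max_right _ _)),
      hN2 _ (le_trans (le_max_right N1 N2) (le_max_right _ _))⟩
  obtain ⟨N, hN⟩ := eventually_atTop.mp (hfu m r hr1 (t/2) (by positivity) (ε/4) hε4)
  refine ⟨N, fun j hj => ?_⟩
  have hsub : C ∩ {x | t < ‖f (φ j) x - g x‖} ⊆
      (K m ∩ {x | t/2 < dist (f (φ j) x) (u r x)}) ∪
      (K m ∩ {x | t/2 ≤ dist (u r x) (g x)}) := by
    rintro x ⟨hxC, hxd⟩
    have hxK : x ∈ K m := hm hxC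
    have hxd' : t < dist (f (φ j) x) (g x) := by
      have : t < ‖f (φ j) x - g x‖ := hxd
      rwa [dist_eq_norm]
    by_cases hca : t/2 < dist (f (φ j) x) (u r x)
    · exact Or.inl ⟨hxK, hca⟩
    · push_neg at hca
      refine Or.inr ⟨hxK, ?_⟩
      have htri := dist_triangle (f (φ j) x) (u r x) (g x)
      show t/2 ≤ dist (u r x) (g x)
      linarith
  calc μ (C ∩ {x | t < ‖f (φ j) x - g x‖}) ≤
      μ (K m ∩ {x | t/2 < dist (f (φ j) x) (u r x)}) +
        μ (K m ∩ {x | t/2 ≤ dist (u r x) (g x)}) :=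
      le_trans (measure_mono hsub) (measure_union_le _ _)
    _ ≤ ((2⁻¹:ℝ≥0∞)^r + ε/4) + ε/4 := add_le_add (hN j hj) hr2
    _ ≤ (ε/4 + ε/4) + (ε/4 + ε/4) := by gcongr; exact le_add_self
    _ = 4 * (ε/4) := by ring
    _ = ε := ENNReal.mul_div_cancel' (by norm_num) (by norm_num)
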